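/- Let A be a finite set of candidates with |A| ≥ 3 and let N = {1,…,n} be a finite set of voters. Every Arrovian Social Welfare Function F : 𝒫^n → 𝒫 that satisfies Independence of Irrelevant Alternatives (IIA) and Weak Pareto (WP) is dictatorial, i.e., there exists a voter i ∈ N such that at every profile P and for all candidates a, b, if a P_i b then a is strictly socially preferred to b under F(P). (Arrow's Impossibility Theorem.) -/

import Mathlib

/-- A voter preference: a strict linear (complete, transitive, antisymmetric) order on `A`. -/
abbrev Pref (A : Type*) := {r : A → A → Prop // IsStrictTotalOrder A r}

/-- Two relations agree on the pair `{a, b}`. -/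
def AgreeOnPair {A : Type*} (r r' : A → A → Prop) (a b : A) : Prop :=
  (r a b ↔ r' a b) ∧ (r b a ↔ r' b a)

/-- Independence of Irrelevant Alternatives for an ASWF. -/
def IIA {A : Type*} {n : ℕ} (F : (Fin n → Pref A) → Pref A) : Prop :=
  ∀ (P P' : Fin n → Pref A) (a b : A),
    (∀ i, AgreeOnPair (P i).1 (P' i).1 a b) → AgreeOnPair (F P).1 (F P').1 a b

/-- Weak Pareto: unanimous strict preference for `a` over `b` yields social
strict preference for `a` over `b`. -/
def WeakPareto {A : Type*} {n : ℕ} (F : (Fin n → Pref A) → Pref A) : Prop :=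
  ∀ (P : Fin n → Pref A) (a b : A), (∀ i, (P i).1 a b) → (F P).1 a b

/-- Dictatorship: some voter's strict preferences are always reproduced socially. -/
def Dictatorial {A : Type*} {n : ℕ} (F : (Fin n → Pref A) → Pref A) : Prop :=
  ∃ i : Fin n, ∀ (P : Fin n → Pref A) (a b : A), (P i).1 a b → (F P).1 a b

set_option linter.unusedSectionVars false

namespace ArrowProof

open scoped Classical

variable {A : Type*} [Fintype A]

lemma ptrans (r : Pref A) {x y z : A} (h1 : r.1 x y) (h2 : r.1 y z) : r.1 x z := by
  haveI := r.2
  exact Trans.trans h1 h2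

lemma pirrefl (r : Pref A) (x : A) : ¬ r.1 x x := by
  haveI := r.2
  exact irrefl x

lemma pasymm (r : Pref A) {x y : A} (h : r.1 x y) : ¬ r.1 y x :=
  fun h' => pirrefl r x (ptrans r h h')

lemma ptotal (r : Pref A) {x y : A} (h : x ≠ y) : r.1 x y ∨ r.1 y x := by
  haveI := r.2
  rcases trichotomous_of r.1 x y with h1 | h1 | h1
  · exact Or.inl h1
  · exact absurd h1 h
  · exact Or.inr h1

lemma pnot_iff (r : Pref A) {x y : A} (h : x ≠ y) : ¬ r.1 x y ↔ r.1 y x := by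
  constructor
  · intro hn; rcases ptotal r h with h1 | h1
    · exact absurd h1 hn
    · exact h1
  · exact fun h1 => pasymm r h1

noncomputable def enc (x : A) : ℚ := ((Fintype.equivFin A x : ℕ) : ℚ)

lemma enc_inj : Function.Injective (enc (A := A)) := by
  intro x y h
  have h' : (Fintype.equivFin A x : ℕ) = (Fintype.equivFin A y : ℕ) := Nat.cast_injective h
  exact (Fintype.equivFin A).injective (Fin.ext h')

lemma enc_nonneg (x : A) : 0 ≤ enc x := by
  unfold enc; positivity

noncomputable def prefOf (g : A → ℚ) (hg : Function.Injective g) : Pref A :=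
  ⟨fun x y => g x < g y,
   { irrefl := fun x => lt_irrefl (g x),
     trans := fun _ _ _ h1 h2 => lt_trans h1 h2,
     trichotomous := fun x y => by
       intro h1 h2
       exact hg (le_antisymm (not_lt.mp h2) (not_lt.mp h1)) }⟩

noncomputable def ovFun (a b c : A) (x : A) : ℚ :=
  if x = a then -3 else if x = b then -2 else if x = c then -1 else enc x

lemma ovFun_key {a b c : A} (hab : a ≠ b) (hac : a ≠ c) (hbc : b ≠ c) (x : A) :
    (ovFun a b c x = -3 ∧ x = a) ∨ (ovFun a b c x = -2 ∧ x = b) ∨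
    (ovFun a b c x = -1 ∧ x = c) ∨ (ovFun a b c x = enc x ∧ x = x) := by
  unfold ovFun
  by_cases h1 : x = a
  · left; simp [h1]
  · by_cases h2 : x = b
    · right; left; simp [h1, h2, hab.symm]
    · by_cases h3 : x = c
      · right; right; left; simp [h1, h2, h3, hac.symm, hbc.symm]
      · right; right; right; simp [h1, h2, h3]

lemma ovFun_inj {a b c : A} (hab : a ≠ b) (hac : a ≠ c) (hbc : b ≠ c) :
    Function.Injective (ovFun a b c) := by
  intro x y h
  rcases ovFun_key hab hac hbc x with ⟨h1, hx⟩ | ⟨h1, hx⟩ | ⟨h1, hx⟩ | ⟨h1, hx⟩ <;>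
    rcases ovFun_key hab hac hbc y with ⟨h2, hy⟩ | ⟨h2, hy⟩ | ⟨h2, hy⟩ | ⟨h2, hy⟩ <;>
    rw [h1, h2] at h <;>
    first
      | exact hx.trans hy.symm
      | exact enc_inj h
      | (exfalso; have hx' := enc_nonneg x; rw [h] at hx'; norm_num at hx')
      | (exfalso; have hy' := enc_nonneg y; rw [← h] at hy'; norm_num at hy')
      | (exfalso; norm_num at h)

/-- `pref3 a b c` : the strict order with `a` best, then `b`, then `c`, then everyone else. -/
noncomputable def pref3 (a b c : A) (hab : a ≠ b) (hac : a ≠ c) (hbc : b ≠ c) : Pref A :=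
  prefOf (ovFun a b c) (ovFun_inj hab hac hbc)

lemma pref3_iff {a b c : A} (hab : a ≠ b) (hac : a ≠ c) (hbc : b ≠ c) (x y : A) :
    (pref3 a b c hab hac hbc).1 x y ↔ ovFun a b c x < ovFun a b c y := Iff.rfl

lemma ovFun_a (a b c : A) : ovFun a b c a = -3 := by simp [ovFun]
lemma ovFun_b {a b c : A} (hab : a ≠ b) : ovFun a b c b = -2 := by
  simp [ovFun, hab.symm]
lemma ovFun_c {a b c : A} (hac : a ≠ c) (hbc : b ≠ c) : ovFun a b c c = -1 := by
  simp [ovFun, hac.symm, hbc.symm]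
lemma ovFun_w {a b c w : A} (h1 : w ≠ a) (h2 : w ≠ b) (h3 : w ≠ c) :
    ovFun a b c w = enc w := by simp [ovFun, h1, h2, h3]

lemma pref3_12 {a b c : A} (hab : a ≠ b) (hac : a ≠ c) (hbc : b ≠ c) :
    (pref3 a b c hab hac hbc).1 a b := by
  rw [pref3_iff, ovFun_a, ovFun_b hab]; norm_num
lemma pref3_13 {a b c : A} (hab : a ≠ b) (hac : a ≠ c) (hbc : b ≠ c) :
    (pref3 a b c hab hac hbc).1 a c := by
  rw [pref3_iff, ovFun_a, ovFun_c hac hbc]; norm_num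
lemma pref3_23 {a b c : A} (hab : a ≠ b) (hac : a ≠ c) (hbc : b ≠ c) :
    (pref3 a b c hab hac hbc).1 b c := by
  rw [pref3_iff, ovFun_b hab, ovFun_c hac hbc]; norm_num
lemma pref3_1w {a b c w : A} (hab : a ≠ b) (hac : a ≠ c) (hbc : b ≠ c)
    (h1 : w ≠ a) (h2 : w ≠ b) (h3 : w ≠ c) :
    (pref3 a b c hab hac hbc).1 a w := by
  rw [pref3_iff, ovFun_a, ovFun_w h1 h2 h3]
  have := enc_nonneg w; linarith
lemma pref3_2w {a b c w : A} (hab : a ≠ b) (hac : a ≠ c) (hbc : b ≠ c)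
    (h1 : w ≠ a) (h2 : w ≠ b) (h3 : w ≠ c) :
    (pref3 a b c hab hac hbc).1 b w := by
  rw [pref3_iff, ovFun_b hab, ovFun_w h1 h2 h3]
  have := enc_nonneg w; linarith
lemma pref3_3w {a b c w : A} (hab : a ≠ b) (hac : a ≠ c) (hbc : b ≠ c)
    (h1 : w ≠ a) (h2 : w ≠ b) (h3 : w ≠ c) :
    (pref3 a b c hab hac hbc).1 c w := by
  rw [pref3_iff, ovFun_c hac hbc, ovFun_w h1 h2 h3]
  have := enc_nonneg w; linarith


section Machinery

variable {n : ℕ} (F : (Fin n → Pref A) → Pref A)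

/-- `G` is semidecisive for `a` over `b`. -/
def SemiDec (G : Finset (Fin n)) (a b : A) : Prop :=
  ∀ P : Fin n → Pref A, (∀ i, (P i).1 a b ↔ i ∈ G) → (F P).1 a b

/-- `G` is decisive. -/
def Dec (G : Finset (Fin n)) : Prop := ∀ a b : A, a ≠ b → SemiDec F G a b

lemma agree_of_iff (r r' : Pref A) {a b : A} (hab : a ≠ b) (h : r.1 a b ↔ r'.1 a b) :
    AgreeOnPair r.1 r'.1 a b :=
  ⟨h, by rw [← pnot_iff r hab, ← pnot_iff r' hab]; exact not_congr h⟩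

lemma semiDec_of_witness (hIIA : IIA F) {G : Finset (Fin n)} {a b : A} (hab : a ≠ b)
    (P : Fin n → Pref A) (hP : ∀ i, (P i).1 a b ↔ i ∈ G) (hsoc : (F P).1 a b) :
    SemiDec F G a b := by
  intro Q hQ
  have hagree : ∀ i, AgreeOnPair (P i).1 (Q i).1 a b := fun i =>
    agree_of_iff _ _ hab (by rw [hP i, hQ i])
  exact (hIIA P Q a b hagree).1.mp hsoc

lemma exists_third (hA : 3 ≤ Fintype.card A) (a b : A) : ∃ c : A, c ≠ a ∧ c ≠ b := by
  by_contra hcon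
  push_neg at hcon
  have hsub : (Finset.univ : Finset A) ⊆ {a, b} := by
    intro x _
    rcases eq_or_ne x a with h | h
    · simp [h]
    · simp [hcon x h]
  have h1 := Finset.card_le_card hsub
  have h2 : ({a, b} : Finset A).card ≤ 2 :=
    (Finset.card_insert_le _ _).trans (by simp)
  rw [Finset.card_univ] at h1
  omega

lemma exists_three (hA : 3 ≤ Fintype.card A) :
    ∃ a b c : A, a ≠ b ∧ a ≠ c ∧ b ≠ c := by
  have hpos : 0 < Fintype.card A := by omega
  obtain ⟨a⟩ := Fintype.card_pos_iff.mp hpos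
  obtain ⟨b, hba, -⟩ := exists_third hA a a
  obtain ⟨c, hca, hcb⟩ := exists_third hA a b
  exact ⟨a, b, c, hba.symm, hca.symm, hcb.symm⟩

/-- A profile splitting into `p` on `G`, and for `j ∉ G` into `q`/`r` according to `cnd j`. -/
noncomputable def condProf (G : Finset (Fin n)) (p : Pref A) (cnd : Fin n → Prop)
    (q r : Pref A) (j : Fin n) : Pref A :=
  if j ∈ G then p else if cnd j then q else r

lemma condProf_mem {G : Finset (Fin n)} {p : Pref A} {cnd : Fin n → Prop} {q r : Pref A}
    {j : Fin n} (hj : j ∈ G) : condProf G p cnd q r j = p := by simp [condProf, hj]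
lemma condProf_t {G : Finset (Fin n)} {p : Pref A} {cnd : Fin n → Prop} {q r : Pref A}
    {j : Fin n} (hj : j ∉ G) (hc : cnd j) : condProf G p cnd q r j = q := by
  simp [condProf, hj, hc]
lemma condProf_f {G : Finset (Fin n)} {p : Pref A} {cnd : Fin n → Prop} {q r : Pref A}
    {j : Fin n} (hj : j ∉ G) (hc : ¬ cnd j) : condProf G p cnd q r j = r := by
  simp [condProf, hj, hc]

/-- A profile split four ways according to membership in `G` and `H`. -/
noncomputable def quadProf (G H : Finset (Fin n)) (p q r s : Pref A) (j : Fin n) : Pref A :=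
  if j ∈ G then (if j ∈ H then p else q) else (if j ∈ H then r else s)

lemma quadProf_tt {G H : Finset (Fin n)} {p q r s : Pref A} {j : Fin n}
    (h1 : j ∈ G) (h2 : j ∈ H) : quadProf G H p q r s j = p := by simp [quadProf, h1, h2]
lemma quadProf_tf {G H : Finset (Fin n)} {p q r s : Pref A} {j : Fin n}
    (h1 : j ∈ G) (h2 : j ∉ H) : quadProf G H p q r s j = q := by simp [quadProf, h1, h2]
lemma quadProf_ft {G H : Finset (Fin n)} {p q r s : Pref A} {j : Fin n}
    (h1 : j ∉ G) (h2 : j ∈ H) : quadProf G H p q r s j = r := by simp [quadProf, h1, h2]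
lemma quadProf_ff {G H : Finset (Fin n)} {p q r s : Pref A} {j : Fin n}
    (h1 : j ∉ G) (h2 : j ∉ H) : quadProf G H p q r s j = s := by simp [quadProf, h1, h2]

lemma dec_univ (hWP : WeakPareto F) : Dec F (Finset.univ : Finset (Fin n)) := by
  intro a b _ P hP
  exact hWP P a b (fun i => (hP i).mpr (Finset.mem_univ i))

lemma not_semidec_empty (hWP : WeakPareto F) (hA : 3 ≤ Fintype.card A)
    {a b : A} (hab : a ≠ b) : ¬ SemiDec F (∅ : Finset (Fin n)) a b := by
  intro h
  obtain ⟨c, hca, hcb⟩ := exists_third hA a b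
  have hpat : ∀ i, ((fun _ : Fin n => pref3 b a c hab.symm hcb.symm hca.symm) i).1 a b
      ↔ i ∈ (∅ : Finset (Fin n)) := by
    intro i
    constructor
    · intro hh
      exact absurd hh (pasymm _ (pref3_12 hab.symm hcb.symm hca.symm))
    · intro hh
      exact absurd hh (Finset.notMem_empty i)
  have h1 := h _ hpat
  have h2 := hWP (fun _ : Fin n => pref3 b a c hab.symm hcb.symm hca.symm) b a
    (fun _ => pref3_12 hab.symm hcb.symm hca.symm)
  exact pasymm _ h1 h2

lemma semidec_or (hIIA : IIA F) (hA : 3 ≤ Fintype.card A) (G : Finset (Fin n))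
    {a b : A} (hab : a ≠ b) : SemiDec F G a b ∨ SemiDec F Gᶜ b a := by
  classical
  obtain ⟨c, hca, hcb⟩ := exists_third hA a b
  set P := condProf G (pref3 a b c hab hca.symm hcb.symm) (fun _ => True)
      (pref3 b a c hab.symm hcb.symm hca.symm) (pref3 b a c hab.symm hcb.symm hca.symm)
    with hPdef
  have hpat : ∀ i, (P i).1 a b ↔ i ∈ G := by
    intro i
    by_cases hi : i ∈ G
    · rw [hPdef, condProf_mem hi]
      exact iff_of_true (pref3_12 _ _ _) hi
    · rw [hPdef, condProf_t hi trivial]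
      exact iff_of_false (pasymm _ (pref3_12 _ _ _)) hi
  have hpat' : ∀ i, (P i).1 b a ↔ i ∈ Gᶜ := by
    intro i
    rw [Finset.mem_compl]
    by_cases hi : i ∈ G
    · rw [hPdef, condProf_mem hi]
      exact iff_of_false (pasymm _ (pref3_12 _ _ _)) (by simp [hi])
    · rw [hPdef, condProf_t hi trivial]
      exact iff_of_true (pref3_12 _ _ _) hi
  rcases ptotal (F P) hab with h | h
  · exact Or.inl (semiDec_of_witness F hIIA hab P hpat h)
  · exact Or.inr (semiDec_of_witness F hIIA hab.symm P hpat' h)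

lemma step1 (hIIA : IIA F) (hWP : WeakPareto F) {a b c : A}
    (hab : a ≠ b) (hac : a ≠ c) (hbc : b ≠ c) {G : Finset (Fin n)}
    (h : SemiDec F G a b) : SemiDec F G a c := by
  intro P hP
  set P' := condProf G (pref3 a b c hab hac hbc) (fun j => (P j).1 a c)
      (pref3 b a c hab.symm hbc hac) (pref3 b c a hbc hab.symm hac.symm) with hP'def
  have h1 : ∀ i, (P' i).1 a b ↔ i ∈ G := by
    intro i
    by_cases hi : i ∈ G
    · rw [hP'def, condProf_mem hi]
      exact iff_of_true (pref3_12 _ _ _) hi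
    · refine iff_of_false ?_ hi
      rw [hP'def]
      by_cases hc : (P i).1 a c
      · rw [condProf_t hi hc]
        exact pasymm _ (pref3_12 _ _ _)
      · rw [condProf_f hi hc]
        exact pasymm _ (pref3_13 _ _ _)
  have hsoc_ab : (F P').1 a b := h P' h1
  have hsoc_bc : (F P').1 b c := by
    apply hWP
    intro i
    rw [hP'def]
    by_cases hi : i ∈ G
    · rw [condProf_mem hi]; exact pref3_23 _ _ _
    · by_cases hc : (P i).1 a c
      · rw [condProf_t hi hc]; exact pref3_13 _ _ _
      · rw [condProf_f hi hc]; exact pref3_12 _ _ _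
  have hsoc_ac : (F P').1 a c := ptrans _ hsoc_ab hsoc_bc
  have hagree : ∀ i, AgreeOnPair (P' i).1 (P i).1 a c := by
    intro i
    apply agree_of_iff _ _ hac
    by_cases hi : i ∈ G
    · rw [hP'def, condProf_mem hi]
      exact iff_of_true (pref3_13 _ _ _) ((hP i).mpr hi)
    · by_cases hc : (P i).1 a c
      · rw [hP'def, condProf_t hi hc]
        exact iff_of_true (pref3_23 _ _ _) hc
      · rw [hP'def, condProf_f hi hc]
        exact iff_of_false (pasymm _ (pref3_23 _ _ _)) hc
  exact (hIIA P' P a c hagree).1.mp hsoc_ac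

lemma step2 (hIIA : IIA F) (hWP : WeakPareto F) {a b c : A}
    (hab : a ≠ b) (hac : a ≠ c) (hbc : b ≠ c) {G : Finset (Fin n)}
    (h : SemiDec F G a b) : SemiDec F G c b := by
  intro P hP
  set P' := condProf G (pref3 c a b hac.symm hbc.symm hab) (fun j => (P j).1 c b)
      (pref3 c b a hbc.symm hac.symm hab.symm) (pref3 b c a hbc hab.symm hac.symm) with hP'def
  have h1 : ∀ i, (P' i).1 a b ↔ i ∈ G := by
    intro i
    by_cases hi : i ∈ G
    · rw [hP'def, condProf_mem hi]
      exact iff_of_true (pref3_23 _ _ _) hi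
    · refine iff_of_false ?_ hi
      rw [hP'def]
      by_cases hc : (P i).1 c b
      · rw [condProf_t hi hc]
        exact pasymm _ (pref3_23 _ _ _)
      · rw [condProf_f hi hc]
        exact pasymm _ (pref3_13 _ _ _)
  have hsoc_ab : (F P').1 a b := h P' h1
  have hsoc_ca : (F P').1 c a := by
    apply hWP
    intro i
    rw [hP'def]
    by_cases hi : i ∈ G
    · rw [condProf_mem hi]; exact pref3_12 _ _ _
    · by_cases hc : (P i).1 c b
      · rw [condProf_t hi hc]; exact pref3_13 _ _ _
      · rw [condProf_f hi hc]; exact pref3_23 _ _ _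
  have hsoc_cb : (F P').1 c b := ptrans _ hsoc_ca hsoc_ab
  have hagree : ∀ i, AgreeOnPair (P' i).1 (P i).1 c b := by
    intro i
    apply agree_of_iff _ _ (Ne.symm hbc)
    by_cases hi : i ∈ G
    · rw [hP'def, condProf_mem hi]
      exact iff_of_true (pref3_13 _ _ _) ((hP i).mpr hi)
    · by_cases hc : (P i).1 c b
      · rw [hP'def, condProf_t hi hc]
        exact iff_of_true (pref3_12 _ _ _) hc
      · rw [hP'def, condProf_f hi hc]
        exact iff_of_false (pasymm _ (pref3_12 _ _ _)) hc
  exact (hIIA P' P c b hagree).1.mp hsoc_cb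

lemma expand (hIIA : IIA F) (hWP : WeakPareto F) (hA : 3 ≤ Fintype.card A)
    {G : Finset (Fin n)} {a b : A} (hab : a ≠ b)
    (h : SemiDec F G a b) : Dec F G := by
  intro c d hcd
  by_cases hca : c = a
  · by_cases hdb : d = b
    · rw [hca, hdb]; exact h
    · have had : a ≠ d := fun e => hcd (hca.trans e)
      rw [hca]
      exact step1 F hIIA hWP hab had (Ne.symm hdb) h
  · by_cases hcb : c = b
    · rw [hcb]
      by_cases hda : d = a
      · rw [hda]
        obtain ⟨x, hxa, hxb⟩ := exists_third hA a b
        have s1 : SemiDec F G a x := step1 F hIIA hWP hab (Ne.symm hxa) (Ne.symm hxb) h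
        have s2 : SemiDec F G b x := step2 F hIIA hWP (Ne.symm hxa) hab hxb s1
        exact step1 F hIIA hWP (Ne.symm hxb) hab.symm hxa s2
      · have hdb : d ≠ b := fun e => hcd (hcb.trans e.symm)
        have s1 : SemiDec F G a d := step1 F hIIA hWP hab (Ne.symm hda) (Ne.symm hdb) h
        exact step2 F hIIA hWP (Ne.symm hda) hab hdb s1
    · have s1 : SemiDec F G c b := step2 F hIIA hWP hab (Ne.symm hca) (Ne.symm hcb) h
      by_cases hdb : d = b
      · rw [hdb]; exact s1
      · exact step1 F hIIA hWP hcb hcd (Ne.symm hdb) s1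

lemma dec_inter (hIIA : IIA F) (hWP : WeakPareto F) (hA : 3 ≤ Fintype.card A)
    {G H : Finset (Fin n)} (hG : Dec F G) (hH : Dec F H) : Dec F (G ∩ H) := by
  obtain ⟨a, b, c, hab, hac, hbc⟩ := exists_three hA
  set P := quadProf G H (pref3 a b c hab hac hbc) (pref3 c a b hac.symm hbc.symm hab)
      (pref3 b c a hbc hab.symm hac.symm) (pref3 c b a hbc.symm hac.symm hab.symm)
    with hPdef
  have pat_ab : ∀ i, (P i).1 a b ↔ i ∈ G := by
    intro i
    by_cases h1 : i ∈ G <;> by_cases h2 : i ∈ H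
    · rw [hPdef, quadProf_tt h1 h2]; exact iff_of_true (pref3_12 _ _ _) h1
    · rw [hPdef, quadProf_tf h1 h2]; exact iff_of_true (pref3_23 _ _ _) h1
    · rw [hPdef, quadProf_ft h1 h2]
      exact iff_of_false (pasymm _ (pref3_13 _ _ _)) h1
    · rw [hPdef, quadProf_ff h1 h2]
      exact iff_of_false (pasymm _ (pref3_23 _ _ _)) h1
  have hab_soc := hG a b hab P pat_ab
  have pat_bc : ∀ i, (P i).1 b c ↔ i ∈ H := by
    intro i
    by_cases h1 : i ∈ G <;> by_cases h2 : i ∈ H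
    · rw [hPdef, quadProf_tt h1 h2]; exact iff_of_true (pref3_23 _ _ _) h2
    · rw [hPdef, quadProf_tf h1 h2]
      exact iff_of_false (pasymm _ (pref3_13 _ _ _)) h2
    · rw [hPdef, quadProf_ft h1 h2]; exact iff_of_true (pref3_12 _ _ _) h2
    · rw [hPdef, quadProf_ff h1 h2]
      exact iff_of_false (pasymm _ (pref3_12 _ _ _)) h2
  have hbc_soc := hH b c hbc P pat_bc
  have hac_soc : (F P).1 a c := ptrans _ hab_soc hbc_soc
  have pat_ac : ∀ i, (P i).1 a c ↔ i ∈ G ∩ H := by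
    intro i
    rw [Finset.mem_inter]
    by_cases h1 : i ∈ G <;> by_cases h2 : i ∈ H
    · rw [hPdef, quadProf_tt h1 h2]
      exact iff_of_true (pref3_13 _ _ _) ⟨h1, h2⟩
    · rw [hPdef, quadProf_tf h1 h2]
      exact iff_of_false (pasymm _ (pref3_12 _ _ _)) (fun hh => h2 hh.2)
    · rw [hPdef, quadProf_ft h1 h2]
      exact iff_of_false (pasymm _ (pref3_23 _ _ _)) (fun hh => h1 hh.1)
    · rw [hPdef, quadProf_ff h1 h2]
      exact iff_of_false (pasymm _ (pref3_13 _ _ _)) (fun hh => h1 hh.1)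
  exact expand F hIIA hWP hA hac (semiDec_of_witness F hIIA hac P pat_ac hac_soc)

lemma dict_of_singleton (hIIA : IIA F) (hWP : WeakPareto F) (hA : 3 ≤ Fintype.card A)
    {i : Fin n} (h : Dec F ({i} : Finset (Fin n))) :
    ∀ (P : Fin n → Pref A) (a b : A), (P i).1 a b → (F P).1 a b := by
  intro P a b hiab
  have hab : a ≠ b := fun e => pirrefl (P i) a (by rw [e] at hiab ⊢; exact hiab)
  obtain ⟨c, hca, hcb⟩ := exists_third hA a b
  set P' := condProf ({i} : Finset (Fin n)) (pref3 a c b hca.symm hab hcb)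
      (fun j => (P j).1 a b) (pref3 c a b hca hcb hab) (pref3 c b a hcb hca hab.symm)
    with hP'def
  have pat_ac : ∀ j, (P' j).1 a c ↔ j ∈ ({i} : Finset (Fin n)) := by
    intro j
    by_cases hj : j ∈ ({i} : Finset (Fin n))
    · rw [hP'def, condProf_mem hj]
      exact iff_of_true (pref3_12 _ _ _) hj
    · refine iff_of_false ?_ hj
      rw [hP'def]
      by_cases hc : (P j).1 a b
      · rw [condProf_t hj hc]
        exact pasymm _ (pref3_12 _ _ _)
      · rw [condProf_f hj hc]
        exact pasymm _ (pref3_13 _ _ _)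
  have hac_soc : (F P').1 a c := h a c (Ne.symm hca) P' pat_ac
  have hcb_soc : (F P').1 c b := by
    apply hWP
    intro j
    rw [hP'def]
    by_cases hj : j ∈ ({i} : Finset (Fin n))
    · rw [condProf_mem hj]; exact pref3_23 _ _ _
    · by_cases hc : (P j).1 a b
      · rw [condProf_t hj hc]; exact pref3_13 _ _ _
      · rw [condProf_f hj hc]; exact pref3_12 _ _ _
  have hab_soc : (F P').1 a b := ptrans _ hac_soc hcb_soc
  have hagree : ∀ j, AgreeOnPair (P' j).1 (P j).1 a b := by
    intro j
    apply agree_of_iff _ _ hab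
    by_cases hj : j ∈ ({i} : Finset (Fin n))
    · rw [hP'def, condProf_mem hj]
      have hj' : j = i := Finset.mem_singleton.mp hj
      exact iff_of_true (pref3_13 _ _ _) (by rw [hj']; exact hiab)
    · by_cases hc : (P j).1 a b
      · rw [hP'def, condProf_t hj hc]
        exact iff_of_true (pref3_23 _ _ _) hc
      · rw [hP'def, condProf_f hj hc]
        exact iff_of_false (pasymm _ (pref3_23 _ _ _)) hc
  exact (hIIA P' P a b hagree).1.mp hab_soc

end Machinery

end ArrowProof

/-- **Arrow's Impossibility Theorem.** -/
theorem arrow_impossibility {A : Type*} [Fintype A] (hA : 3 ≤ Fintype.card A)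
    {n : ℕ} (F : (Fin n → Pref A) → Pref A)
    (hIIA : IIA F) (hWP : WeakPareto F) : Dictatorial F := by
  classical
  obtain ⟨a, b, c, hab, hac, hbc⟩ := ArrowProof.exists_three hA
  set DD : Finset (Finset (Fin n)) := Finset.univ.filter (fun G => ArrowProof.Dec F G)
    with hDD
  have hinf : ∀ s : Finset (Finset (Fin n)),
      (∀ G ∈ s, ArrowProof.Dec F G) → ArrowProof.Dec F (s.inf id) := by
    intro s
    induction s using Finset.induction_on with
    | empty =>
        intro _
        rw [Finset.inf_empty, Finset.top_eq_univ]
        exact ArrowProof.dec_univ F hWP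
    | insert _ _ hx ih =>
        intro hall
        rw [Finset.inf_insert]
        have h1 := hall _ (Finset.mem_insert_self _ _)
        have h2 := ih (fun G hG => hall _ (Finset.mem_insert_of_mem hG))
        simpa only [id, Finset.inf_eq_inter] using
          ArrowProof.dec_inter F hIIA hWP hA h1 h2
  have hDstar : ArrowProof.Dec F (DD.inf id) :=
    hinf DD (fun G hG => (Finset.mem_filter.mp hG).2)
  have hne : (DD.inf id).Nonempty := by
    rcases Finset.eq_empty_or_nonempty (DD.inf id) with he | hne
    · exfalso
      have hd := hDstar a b hab
      rw [he] at hd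
      exact ArrowProof.not_semidec_empty F hWP hA hab hd
    · exact hne
  obtain ⟨i, hi⟩ := hne
  rcases ArrowProof.semidec_or F hIIA hA ({i} : Finset (Fin n)) hab with h | h
  · exact ⟨i, ArrowProof.dict_of_singleton F hIIA hWP hA
      (ArrowProof.expand F hIIA hWP hA hab h)⟩
  · exfalso
    have hdec : ArrowProof.Dec F (({i} : Finset (Fin n))ᶜ) :=
      ArrowProof.expand F hIIA hWP hA hab.symm h
    have hmem : (({i} : Finset (Fin n))ᶜ) ∈ DD :=
      Finset.mem_filter.mpr ⟨Finset.mem_univ _, hdec⟩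
    have hle : DD.inf id ≤ (({i} : Finset (Fin n))ᶜ) := Finset.inf_le hmem
    have hcontr := (Finset.le_iff_subset.mp hle) hi
    simp at hcontr
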